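/- For every real number α with 0 < α ≤ 1 and every integer k ≥ 1, one has arsinh(2·(k + α)) − arsinh(2·α) ≥ arsinh(4) − arsinh(2). -/

import Mathlib

open Real

private lemma arsinh_gap_hasDerivAt (t : ℝ) :
    HasDerivAt (fun s : ℝ => arsinh (s + 2) - arsinh s)
      ((√(1 + (t + 2) ^ 2))⁻¹ - (√(1 + t ^ 2))⁻¹) t := by
  have h1 : HasDerivAt (fun s : ℝ => arsinh (s + 2)) ((√(1 + (t + 2) ^ 2))⁻¹ * 1) t :=
    by have := (Real.hasDerivAt_arsinh (t + 2)).comp t ((hasDerivAt_id t).add_const 2); exact this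
  have h2 := h1.sub (Real.hasDerivAt_arsinh t); rw [mul_one] at h2; exact h2

private lemma arsinh_gap_antitone :
    AntitoneOn (fun s : ℝ => arsinh (s + 2) - arsinh s) (Set.Icc 0 2) := by
  apply antitoneOn_of_deriv_nonpos (convex_Icc 0 2)
  · exact (Real.continuous_arsinh.comp (continuous_id.add continuous_const)).sub
      Real.continuous_arsinh |>.continuousOn
  · intro t _
    exact (arsinh_gap_hasDerivAt t).differentiableAt.differentiableWithinAt
  · intro t ht
    rw [interior_Icc] at ht
    rw [(arsinh_gap_hasDerivAt t).deriv]
    have h0 : (0:ℝ) < √(1 + t ^ 2) := by positivity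
    have hle : √(1 + t ^ 2) ≤ √(1 + (t + 2) ^ 2) := by
      apply Real.sqrt_le_sqrt; nlinarith [ht.1]
    have := inv_anti₀ h0 hle
    linarith

theorem arsinh_cusp_winding_difference_ge (α : ℝ) (hα : 0 < α) (hα' : α ≤ 1)
    (k : ℤ) (hk : 1 ≤ k) :
    Real.arsinh (2 * (k + α)) - Real.arsinh (2 * α) ≥
      Real.arsinh 4 - Real.arsinh 2 := by
  have hk1 : (1:ℝ) ≤ (k:ℝ) := by exact_mod_cast hk
  have h1 : Real.arsinh (2 * α + 2) ≤ Real.arsinh (2 * (k + α)) := by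
    rw [Real.arsinh_le_arsinh]; linarith
  have h2 : arsinh (2 + 2) - arsinh 2 ≤ arsinh (2 * α + 2) - arsinh (2 * α) := by
    exact arsinh_gap_antitone ⟨by linarith, by linarith⟩ ⟨by norm_num, le_refl 2⟩
      (by linarith)
  have h4 : (2:ℝ) + 2 = 4 := by norm_num
  rw [h4] at h2
  linarith
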